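/- Let G(u) = Bu be linear with B ∈ ℝ^{K×N}, Λ, C positive definite, and L := BᵀΛ⁻¹B + C⁻¹. The stochastic Newton proposal v_SN := u − L⁻¹(Lu − BᵀΛ⁻¹d − C⁻¹u₀) + w, where w ∼ N(0, L⁻¹) (so v_SN = u_MAP + w), has the same distribution as the rMAP sample û_MAP = L⁻¹(BᵀΛ⁻¹(d+θ) + C⁻¹(u₀+ε)) where θ ∼ N(0, Λ), ε ∼ N(0, C) are independent; both are N(u_MAP, L⁻¹). -/

import Mathlib

open MeasureTheory ProbabilityTheory Matrix Real
open scoped NNReal ENNReal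

/-- A random vector `X` is Gaussian with mean `m` and covariance `S` iff every
one-dimensional linear projection has the corresponding real Gaussian law. -/
def IsGaussianVec {Ω : Type} [MeasurableSpace Ω] {ι : Type} [Fintype ι]
    (P : Measure Ω) (X : Ω → ι → ℝ) (m : ι → ℝ) (S : Matrix ι ι ℝ) : Prop :=
  ∀ a : ι → ℝ, P.map (fun ω => a ⬝ᵥ X ω)
    = gaussianReal (a ⬝ᵥ m) ((a ⬝ᵥ S.mulVec a).toNNReal)

lemma gaussianPDFReal_le (m : ℝ) (v : ℝ≥0) (x : ℝ) :
    gaussianPDFReal m v x ≤ (Real.sqrt (2 * π * v))⁻¹ := by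
  rw [gaussianPDFReal]
  refine mul_le_of_le_one_right (inv_nonneg.2 (Real.sqrt_nonneg _)) ?_
  refine Real.exp_le_one_iff.2 ?_
  exact div_nonpos_of_nonpos_of_nonneg (neg_nonpos.2 (sq_nonneg (x - m)))
    (mul_nonneg (by norm_num) v.coe_nonneg)

lemma integrable_gauss_prod (m₁ m₂ : ℝ) (v₁ v₂ : ℝ≥0) (y : ℝ) :
    Integrable (fun x => gaussianPDFReal m₁ v₁ x * gaussianPDFReal m₂ v₂ (y - x)) := by
  have h := (integrable_gaussianPDFReal m₁ v₁).bdd_mul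
    (c := (Real.sqrt (2 * π * v₂))⁻¹)
    (f := fun x => gaussianPDFReal m₂ v₂ (y - x)) ?_ ?_
  · simpa [mul_comm] using h
  · exact ((measurable_gaussianPDFReal m₂ v₂).comp (measurable_const.sub measurable_id)).aestronglyMeasurable
  · refine ae_of_all _ fun x => ?_
    rw [Real.norm_eq_abs, abs_of_nonneg (gaussianPDFReal_nonneg _ _ _)]
    exact gaussianPDFReal_le _ _ _

lemma gaussian_conv_integral (m₁ m₂ : ℝ) {v₁ v₂ : ℝ≥0} (h₁ : v₁ ≠ 0) (h₂ : v₂ ≠ 0) (y : ℝ) :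
    ∫ x, gaussianPDFReal m₁ v₁ x * gaussianPDFReal m₂ v₂ (y - x)
      = gaussianPDFReal (m₁ + m₂) (v₁ + v₂) y := by
  set a : ℝ := (v₁ : ℝ) with ha'
  set b : ℝ := (v₂ : ℝ) with hb'
  have ha : 0 < a := lt_of_le_of_ne v₁.coe_nonneg (by simpa [ha'] using (NNReal.coe_ne_zero.2 h₁).symm)
  have hb : 0 < b := lt_of_le_of_ne v₂.coe_nonneg (by simpa [hb'] using (NNReal.coe_ne_zero.2 h₂).symm)
  have hab : 0 < a + b := by linarith
  have hπ : 0 < π := Real.pi_pos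
  set t : ℝ := y - m₁ - m₂ with ht
  set c : ℝ := (a + b) / (2 * a * b) with hc
  have hcpos : 0 < c := by positivity
  set dd : ℝ := m₁ + a * t / (a + b) with hdd
  set Kc : ℝ := (Real.sqrt (2 * π * a))⁻¹ * (Real.sqrt (2 * π * b))⁻¹
      * Real.exp (-t ^ 2 / (2 * (a + b))) with hK
  have hfun : ∀ x, gaussianPDFReal m₁ v₁ x * gaussianPDFReal m₂ v₂ (y - x)
      = Kc * Real.exp (-c * (x - dd) ^ 2) := by
    intro x
    have e : Real.exp (-(x - m₁)^2 / (2*a) + -(y - x - m₂)^2 / (2*b))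
        = Real.exp (-t^2/(2*(a+b))) * Real.exp (-c*(x-dd)^2) := by
      rw [← Real.exp_add]; congr 1; rw [hc, hdd, ht]; field_simp; ring
    calc gaussianPDFReal m₁ v₁ x * gaussianPDFReal m₂ v₂ (y-x)
        = (Real.sqrt (2*π*a))⁻¹ * (Real.sqrt (2*π*b))⁻¹
          * Real.exp (-(x-m₁)^2/(2*a) + -(y-x-m₂)^2/(2*b)) := by
          rw [gaussianPDFReal, gaussianPDFReal, Real.exp_add]; ring
      _ = Kc * Real.exp (-c*(x-dd)^2) := by rw [e, hK]; ring
  rw [integral_congr_ae (ae_of_all _ hfun), integral_const_mul]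
  have : ∫ x, Real.exp (-c * (x - dd) ^ 2) = Real.sqrt (π / c) := by
    rw [integral_sub_right_eq_self (fun x => Real.exp (-c * x ^ 2)) dd, integral_gaussian]
  rw [this, gaussianPDFReal]
  have hvsum : ((v₁ + v₂ : ℝ≥0) : ℝ) = a + b := by push_cast; ring
  rw [hvsum]
  have hexp : (-t ^ 2 / (2 * (a + b))) = -(y - (m₁ + m₂)) ^ 2 / (2 * (a + b)) := by
    rw [ht]; ring_nf
  rw [hK, hexp]
  have hsq : (Real.sqrt (2 * π * a))⁻¹ * (Real.sqrt (2 * π * b))⁻¹ * Real.sqrt (π / c)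
      = (Real.sqrt (2 * π * (a + b)))⁻¹ := by
    rw [← Real.sqrt_inv, ← Real.sqrt_inv, ← Real.sqrt_mul (by positivity), ← Real.sqrt_mul (by positivity), ← Real.sqrt_inv]
    congr 1
    rw [hc]
    field_simp
  calc (Real.sqrt (2 * π * a))⁻¹ * (Real.sqrt (2 * π * b))⁻¹
        * Real.exp (-(y - (m₁ + m₂)) ^ 2 / (2 * (a + b))) * Real.sqrt (π / c)
      = ((Real.sqrt (2 * π * a))⁻¹ * (Real.sqrt (2 * π * b))⁻¹ * Real.sqrt (π / c))
        * Real.exp (-(y - (m₁ + m₂)) ^ 2 / (2 * (a + b))) := by ring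
    _ = _ := by rw [hsq]

lemma gaussianReal_prod_map_add (m₁ m₂ : ℝ) (v₁ v₂ : ℝ≥0) :
    ((gaussianReal m₁ v₁).prod (gaussianReal m₂ v₂)).map (fun p : ℝ × ℝ => p.1 + p.2)
      = gaussianReal (m₁ + m₂) (v₁ + v₂) := by
  by_cases h₁ : v₁ = 0
  · subst h₁
    rw [gaussianReal_zero_var, Measure.dirac_prod,
      Measure.map_map measurable_add measurable_prodMk_left]
    have : ((fun p : ℝ × ℝ => p.1 + p.2) ∘ Prod.mk m₁) = (fun y => m₁ + y) := rfl
    rw [this, gaussianReal_map_const_add, add_comm m₂ m₁, zero_add]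
  by_cases h₂ : v₂ = 0
  · subst h₂
    rw [gaussianReal_zero_var, Measure.prod_dirac,
      Measure.map_map measurable_add measurable_prodMk_right]
    have : ((fun p : ℝ × ℝ => p.1 + p.2) ∘ (fun x => (x, m₂))) = (fun x => x + m₂) := rfl
    rw [this, gaussianReal_map_add_const, add_zero]
  -- main case
  ext s hs
  rw [Measure.map_apply measurable_add hs, Measure.prod_apply (measurable_add hs)]
  have hmk : ∀ x : ℝ, (Prod.mk x ⁻¹' ((fun p : ℝ × ℝ => p.1 + p.2) ⁻¹' s))
      = (fun y => x + y) ⁻¹' s := fun x => rfl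
  have step1 : ∀ x : ℝ, gaussianReal m₂ v₂ ((fun y => x + y) ⁻¹' s)
      = ∫⁻ y in s, gaussianPDF (m₂ + x) v₂ y := by
    intro x
    rw [← Measure.map_apply (measurable_const_add x) hs, gaussianReal_map_const_add,
      gaussianReal_apply _ h₂]
  simp_rw [hmk, step1]
  have hpdf2 : ∀ x y : ℝ, gaussianPDF (m₂ + x) v₂ y = gaussianPDF m₂ v₂ (y - x) := by
    intro x y
    rw [gaussianPDF, gaussianPDF, gaussianPDFReal_sub]
  have hmeas2 : Measurable (Function.uncurry fun x y =>
      gaussianPDF m₁ v₁ x * Set.indicator s (fun y => gaussianPDF m₂ v₂ (y - x)) y) := by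
    apply Measurable.mul
    · exact (measurable_gaussianPDF m₁ v₁).comp measurable_fst
    · exact Measurable.indicator ((measurable_gaussianPDF m₂ v₂).comp
        (measurable_snd.sub measurable_fst)) (hs.preimage measurable_snd)
  simp_rw [hpdf2, ← lintegral_indicator hs]
  have hmeasg : Measurable (fun x => ∫⁻ y, Set.indicator s (fun y => gaussianPDF m₂ v₂ (y - x)) y) := by
    apply Measurable.lintegral_prod_right
      (f := fun x y => Set.indicator s (fun y => gaussianPDF m₂ v₂ (y - x)) y)
    have : (Function.uncurry fun x y => Set.indicator s (fun y => gaussianPDF m₂ v₂ (y - x)) y)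
        = Set.indicator (Prod.snd ⁻¹' s) (fun p : ℝ × ℝ => gaussianPDF m₂ v₂ (p.2 - p.1)) := by
      ext p
      by_cases hp : p.2 ∈ s
      · simp [Function.uncurry, Set.indicator_of_mem, hp]
      · simp [Function.uncurry, Set.indicator_of_notMem, hp]
    rw [this]
    exact Measurable.indicator ((measurable_gaussianPDF m₂ v₂).comp
      (measurable_snd.sub measurable_fst)) (hs.preimage measurable_snd)
  rw [gaussianReal_of_var_ne_zero _ h₁,
    lintegral_withDensity_eq_lintegral_mul _ (measurable_gaussianPDF m₁ v₁) hmeasg]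
  simp only [Pi.mul_apply]
  have hpull : ∀ x : ℝ, gaussianPDF m₁ v₁ x
        * ∫⁻ y, Set.indicator s (fun y => gaussianPDF m₂ v₂ (y - x)) y
      = ∫⁻ y, gaussianPDF m₁ v₁ x * Set.indicator s (fun y => gaussianPDF m₂ v₂ (y - x)) y := by
    intro x
    exact (lintegral_const_mul _ (Measurable.indicator (by measurability) hs)).symm
  simp_rw [hpull]
  rw [lintegral_lintegral_swap hmeas2.aemeasurable]
  have hind : ∀ y : ℝ, (∫⁻ x, gaussianPDF m₁ v₁ x
        * Set.indicator s (fun y => gaussianPDF m₂ v₂ (y - x)) y)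
      = Set.indicator s (fun y => ∫⁻ x, gaussianPDF m₁ v₁ x * gaussianPDF m₂ v₂ (y - x)) y := by
    intro y
    by_cases hy : y ∈ s
    · simp only [Set.indicator_of_mem hy]
    · simp only [Set.indicator_of_notMem hy, mul_zero, lintegral_zero]
  simp_rw [hind]
  have hsum : v₁ + v₂ ≠ 0 := fun h => h₁ (by simpa using (add_eq_zero.mp h).1)
  rw [lintegral_indicator hs, gaussianReal_apply _ hsum]
  refine setLIntegral_congr_fun_ae hs (ae_of_all _ fun y _ => ?_)
  have key : ∫⁻ x, gaussianPDF m₁ v₁ x * gaussianPDF m₂ v₂ (y - x)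
      = ENNReal.ofReal (∫ x, gaussianPDFReal m₁ v₁ x * gaussianPDFReal m₂ v₂ (y - x)) := by
    simp_rw [gaussianPDF, ← ENNReal.ofReal_mul (gaussianPDFReal_nonneg m₁ v₁ _)]
    rw [← ofReal_integral_eq_lintegral_ofReal (integrable_gauss_prod m₁ m₂ v₁ v₂ y)
      (ae_of_all _ fun x => mul_nonneg (gaussianPDFReal_nonneg _ _ _) (gaussianPDFReal_nonneg _ _ _))]
  rw [key, gaussian_conv_integral m₁ m₂ h₁ h₂ y, gaussianPDF]

lemma map_add_gaussian {Ω : Type} [MeasurableSpace Ω] (P : Measure Ω) [IsProbabilityMeasure P]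
    {X Y : Ω → ℝ} (hX : Measurable X) (hY : Measurable Y) (h : ProbabilityTheory.IndepFun X Y P)
    {m₁ m₂ : ℝ} {v₁ v₂ : ℝ≥0}
    (h1 : P.map X = gaussianReal m₁ v₁) (h2 : P.map Y = gaussianReal m₂ v₂) :
    P.map (fun ω => X ω + Y ω) = gaussianReal (m₁ + m₂) (v₁ + v₂) := by
  have hjoint : P.map (fun ω => (X ω, Y ω)) = (P.map X).prod (P.map Y) :=
    (ProbabilityTheory.indepFun_iff_map_prod_eq_prod_map_map hX.aemeasurable hY.aemeasurable).mp h
  have hcomp : (fun ω => X ω + Y ω)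
      = (fun p : ℝ × ℝ => p.1 + p.2) ∘ (fun ω => (X ω, Y ω)) := rfl
  rw [hcomp, ← Measure.map_map measurable_add (hX.prodMk hY), hjoint, h1, h2,
    gaussianReal_prod_map_add]

lemma map_const_add_gaussian {Ω : Type} [MeasurableSpace Ω] (P : Measure Ω)
    {Z : Ω → ℝ} (hZ : Measurable Z) {m : ℝ} {v : ℝ≥0}
    (h : P.map Z = gaussianReal m v) (k : ℝ) :
    P.map (fun ω => k + Z ω) = gaussianReal (m + k) v := by
  have hcomp : (fun ω => k + Z ω) = (fun x => k + x) ∘ Z := rfl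
  rw [hcomp, ← Measure.map_map (measurable_const_add k) hZ, h, gaussianReal_map_const_add]

open Matrix

lemma measurable_dot {ι Ω : Type} [Fintype ι] [MeasurableSpace Ω] (a : ι → ℝ)
    {X : Ω → ι → ℝ} (hX : Measurable X) : Measurable fun ω => a ⬝ᵥ X ω := by
  simp only [dotProduct]
  exact Finset.measurable_sum _ fun i _ =>
    measurable_const.mul ((measurable_pi_apply i).comp hX)

lemma quad_form_eq {n m : ℕ} (a : Fin n → ℝ) (Nm : Matrix (Fin n) (Fin m) ℝ)
    (A : Matrix (Fin m) (Fin m) ℝ) :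
    (a ᵥ* Nm) ⬝ᵥ A *ᵥ (a ᵥ* Nm) = a ⬝ᵥ (Nm * A * Nmᵀ) *ᵥ a := by
  have hNm : a ᵥ* Nm = Nmᵀ *ᵥ a := (mulVec_transpose Nm a).symm
  rw [hNm, mulVec_mulVec, dotProduct_mulVec, dotProduct_mulVec, ← hNm, vecMul_vecMul,
    Matrix.mul_assoc]


theorem stochastic_newton_eq_rMAP_linear {K N : ℕ}
    (B : Matrix (Fin K) (Fin N) ℝ)
    (Λ : Matrix (Fin K) (Fin K) ℝ) (C : Matrix (Fin N) (Fin N) ℝ)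
    (hΛ : Λ.PosDef) (hC : C.PosDef)
    (L : Matrix (Fin N) (Fin N) ℝ) (hL : L = Bᵀ * Λ⁻¹ * B + C⁻¹)
    (d : Fin K → ℝ) (u0 u : Fin N → ℝ)
    (uMAP : Fin N → ℝ)
    (huMAP : uMAP = L⁻¹.mulVec ((Bᵀ * Λ⁻¹).mulVec d + C⁻¹.mulVec u0))
    {Ω : Type} [MeasurableSpace Ω] (P : Measure Ω) [IsProbabilityMeasure P]
    (θ : Ω → (Fin K → ℝ)) (ε : Ω → (Fin N → ℝ)) (w : Ω → (Fin N → ℝ))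
    (hθm : Measurable θ) (hεm : Measurable ε) (hwm : Measurable w)
    (hθ : IsGaussianVec P θ 0 Λ) (hε : IsGaussianVec P ε 0 C)
    (hw : IsGaussianVec P w 0 L⁻¹)
    (hindep : IndepFun θ ε P) :
    IsGaussianVec P
        (fun ω => u - L⁻¹.mulVec (L.mulVec u - (Bᵀ * Λ⁻¹).mulVec d - C⁻¹.mulVec u0)
            + w ω)
        uMAP L⁻¹
      ∧ IsGaussianVec P
        (fun ω => L⁻¹.mulVec ((Bᵀ * Λ⁻¹).mulVec (d + θ ω) + C⁻¹.mulVec (u0 + ε ω)))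
        uMAP L⁻¹ := by
  -- linear algebra setup
  have hΛi : Λ⁻¹.PosDef := hΛ.inv
  have hLpd : L.PosDef := by
    rw [hL]
    refine Matrix.PosDef.posSemidef_add ?_ hC.inv
    have := hΛi.posSemidef.conjTranspose_mul_mul_same B
    rwa [conjTranspose_eq_transpose_of_trivial] at this
  have hLdet : IsUnit L.det := (Matrix.isUnit_iff_isUnit_det _).1 hLpd.isUnit
  have hΛdet : IsUnit Λ.det := (Matrix.isUnit_iff_isUnit_det _).1 hΛ.isUnit
  have hCdet : IsUnit C.det := (Matrix.isUnit_iff_isUnit_det _).1 hC.isUnit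
  have hLiL : L⁻¹ * L = 1 := Matrix.nonsing_inv_mul L hLdet
  have hLLi : L * L⁻¹ = 1 := Matrix.mul_nonsing_inv L hLdet
  have hΛsym : Λ⁻¹ᵀ = Λ⁻¹ := by
    have := hΛi.isHermitian
    rwa [Matrix.IsHermitian, conjTranspose_eq_transpose_of_trivial] at this
  have hCsym : C⁻¹ᵀ = C⁻¹ := by
    have := hC.inv.isHermitian
    rwa [Matrix.IsHermitian, conjTranspose_eq_transpose_of_trivial] at this
  have hLsym : L⁻¹ᵀ = L⁻¹ := by
    have := hLpd.inv.isHermitian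
    rwa [Matrix.IsHermitian, conjTranspose_eq_transpose_of_trivial] at this
  constructor
  · -- part 1
    have hconst : u - L⁻¹.mulVec (L.mulVec u - (Bᵀ * Λ⁻¹).mulVec d - C⁻¹.mulVec u0) = uMAP := by
      rw [huMAP, mulVec_sub, mulVec_sub, mulVec_mulVec, hLiL, one_mulVec, mulVec_add]
      abel
    intro a
    simp only [hconst, dotProduct_add]
    have hlaw := hw a
    rw [dotProduct_zero] at hlaw
    have := map_const_add_gaussian P (measurable_dot a hwm) hlaw (a ⬝ᵥ uMAP)
    rwa [zero_add] at this
  · -- part 2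
    have hfun : (fun ω => L⁻¹.mulVec ((Bᵀ * Λ⁻¹).mulVec (d + θ ω) + C⁻¹.mulVec (u0 + ε ω)))
        = fun ω => uMAP + ((L⁻¹ * (Bᵀ * Λ⁻¹)).mulVec (θ ω) + (L⁻¹ * C⁻¹).mulVec (ε ω)) := by
      funext ω
      rw [huMAP]
      simp only [mulVec_add, ← mulVec_mulVec]
      abel
    rw [hfun]
    intro a
    simp only [dotProduct_add, dotProduct_mulVec]
    set b : Fin K → ℝ := a ᵥ* (L⁻¹ * (Bᵀ * Λ⁻¹)) with hb
    set c : Fin N → ℝ := a ᵥ* (L⁻¹ * C⁻¹) with hcc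
    have hZ1m : Measurable fun ω => b ⬝ᵥ θ ω := measurable_dot b hθm
    have hZ2m : Measurable fun ω => c ⬝ᵥ ε ω := measurable_dot c hεm
    have hlaw1 := hθ b
    have hlaw2 := hε c
    rw [dotProduct_zero] at hlaw1 hlaw2
    have hindepZ : ProbabilityTheory.IndepFun (fun ω => b ⬝ᵥ θ ω) (fun ω => c ⬝ᵥ ε ω) P :=
      hindep.comp (measurable_dot b measurable_id) (measurable_dot c measurable_id)
    have hsum := map_add_gaussian P hZ1m hZ2m hindepZ hlaw1 hlaw2
    have hfinal := map_const_add_gaussian P (hZ1m.add hZ2m) hsum (a ⬝ᵥ uMAP)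
    rw [add_zero, zero_add] at hfinal
    -- identify the variance
    have hmat : (L⁻¹ * (Bᵀ * Λ⁻¹)) * Λ * (L⁻¹ * (Bᵀ * Λ⁻¹))ᵀ
        + (L⁻¹ * C⁻¹) * C * (L⁻¹ * C⁻¹)ᵀ = L⁻¹ := by
      simp only [Matrix.transpose_mul, Matrix.transpose_transpose, hLsym, hCsym, hΛsym]
      simp only [Matrix.mul_assoc]
      rw [Matrix.nonsing_inv_mul_cancel_left Λ _ hΛdet,
        Matrix.nonsing_inv_mul_cancel_left C _ hCdet]
      have e1 : Bᵀ * (Λ⁻¹ * (B * L⁻¹)) = (Bᵀ * Λ⁻¹ * B) * L⁻¹ := by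
        simp only [Matrix.mul_assoc]
      rw [e1, ← Matrix.mul_add, ← Matrix.add_mul, ← hL, hLLi, Matrix.mul_one]
    have hnn1 : 0 ≤ b ⬝ᵥ Λ *ᵥ b := by simpa using hΛ.posSemidef.dotProduct_mulVec_nonneg b
    have hnn2 : 0 ≤ c ⬝ᵥ C *ᵥ c := by simpa using hC.posSemidef.dotProduct_mulVec_nonneg c
    have hvar : b ⬝ᵥ Λ *ᵥ b + c ⬝ᵥ C *ᵥ c = (a ᵥ* L⁻¹) ⬝ᵥ a := by
      rw [hb, hcc, quad_form_eq, quad_form_eq, ← dotProduct_add, ← add_mulVec, hmat,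
        dotProduct_mulVec]
    refine hfinal.trans ?_
    congr 1
    rw [← Real.toNNReal_add hnn1 hnn2, hvar]
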